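/- Random typing satisfies a logarithmic law of abbreviation: the length l of a word with probability p satisfies l = a·log p + b exactly, where a = (log((1−p_s)/N))^{-1} and b = a·log((1−p_s)^{l_min}/p_s). -/
import Mathlib


/-- Random typing satisfies an exact logarithmic law of abbreviation: the
length `l` of a word of probability `p = ((1−p_s)/N)^l · p_s/(1−p_s)^{l_min}`
satisfies `l = a·log p + b` with `a = (log((1−p_s)/N))⁻¹` and
`b = a·log((1−p_s)^{l_min}/p_s)`. -/
theorem stmt11 (N lmin l : ℕ) (hN : 2 ≤ N) (ps : ℝ) (h0 : 0 < ps) (h1 : ps < 1) :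
    (l : ℝ) =
      (Real.log ((1 - ps) / N))⁻¹ *
          Real.log (((1 - ps) / N) ^ l * (ps / (1 - ps) ^ lmin)) +
        (Real.log ((1 - ps) / N))⁻¹ * Real.log ((1 - ps) ^ lmin / ps) := by
  have hps : (0:ℝ) < 1 - ps := by linarith
  have hNpos : (0:ℝ) < N := by positivity
  have hx : (0:ℝ) < (1 - ps) / N := div_pos hps hNpos
  have hxlt : (1 - ps) / N < 1 := by
    rw [div_lt_one hNpos]
    have : (2:ℝ) ≤ N := by exact_mod_cast hN
    linarith
  have hlogx : Real.log ((1 - ps) / N) ≠ 0 :=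
    ne_of_lt (Real.log_neg hx hxlt)
  have hc : (0:ℝ) < ps / (1 - ps) ^ lmin := by positivity
  rw [Real.log_mul (by positivity) (ne_of_gt hc), Real.log_pow,
    Real.log_div (by positivity) (ne_of_gt h0),
    Real.log_div (ne_of_gt h0) (by positivity)]
  field_simp
  ring
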